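/- arXiv:2012.14490 — 4 statements merged into one kernel-verified Lean document; each statement's English description precedes it below -/
import Mathlib

section
/- There do not exist bounded linear operators Q and P on a nonzero complex Hilbert space H such that Q∘P - P∘Q = i·𝟙, where 𝟙 is the identity operator. -/
/-- **Wintner–Wielandt theorem**: there are no bounded linear operators `Q`, `P` on a
nonzero complex Hilbert space satisfying the canonical commutation relation
`Q ∘ P - P ∘ Q = i • 𝟙`. -/
theorem wintner_wielandt
    {H : Type*} [NormedAddCommGroup H] [InnerProductSpace ℂ H] [CompleteSpace H]
    [Nontrivial H] :
    ¬ ∃ Q P : H →L[ℂ] H, Q.comp P - P.comp Q = Complex.I • (1 : H →L[ℂ] H) := by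
  rintro ⟨Q, P, hQP⟩
  have hmul : Q * P - P * Q = Complex.I • (1 : H →L[ℂ] H) := hQP
  -- commutator with powers
  have hcomm : ∀ n : ℕ, Q * P ^ (n + 1) - P ^ (n + 1) * Q
      = (((n : ℂ) + 1) * Complex.I) • P ^ n := by
    intro n
    induction n with
    | zero => simpa using hmul
    | succ n ih =>
      have : Q * P ^ (n + 2) - P ^ (n + 2) * Q
          = (Q * P ^ (n + 1) - P ^ (n + 1) * Q) * P + P ^ (n + 1) * (Q * P - P * Q) := by
        simp only [pow_succ]
        noncomm_ring
      rw [this, ih, hmul]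
      rw [smul_mul_assoc, mul_smul_comm, mul_one, ← pow_succ]
      push_cast
      rw [← add_smul]
      ring_nf
  -- powers of P are nonzero
  have hpow : ∀ n : ℕ, P ^ n ≠ 0 := by
    intro n
    induction n with
    | zero => simp only [pow_zero]; exact one_ne_zero
    | succ n ih =>
      intro h
      apply ih
      have := hcomm n
      rw [h, mul_zero, zero_mul, sub_zero] at this
      have hc : ((n : ℂ) + 1) * Complex.I ≠ 0 := by
        apply mul_ne_zero _ Complex.I_ne_zero
        exact Nat.cast_add_one_ne_zero n
      exact (smul_eq_zero.mp this.symm).resolve_left hc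
  -- norm inequality
  have key : ∀ n : ℕ, ((n : ℝ) + 1) ≤ 2 * ‖Q‖ * ‖P‖ := by
    intro n
    have hP : (0 : ℝ) < ‖P ^ n‖ := norm_pos_iff.mpr (hpow n)
    have h1 : ((n : ℝ) + 1) * ‖P ^ n‖ = ‖Q * P ^ (n + 1) - P ^ (n + 1) * Q‖ := by
      rw [hcomm n, norm_smul, norm_mul, Complex.norm_I, mul_one]
      congr 1
      have h : ((n : ℂ) + 1) = ((n + 1 : ℕ) : ℂ) := by push_cast; ring
      rw [h, Complex.norm_natCast]
      push_cast; ring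
    have h2 : ‖Q * P ^ (n + 1) - P ^ (n + 1) * Q‖ ≤ 2 * ‖Q‖ * ‖P‖ * ‖P ^ n‖ := by
      calc ‖Q * P ^ (n + 1) - P ^ (n + 1) * Q‖
          ≤ ‖Q * P ^ (n + 1)‖ + ‖P ^ (n + 1) * Q‖ := norm_sub_le _ _
        _ ≤ ‖Q‖ * ‖P ^ (n + 1)‖ + ‖P ^ (n + 1)‖ * ‖Q‖ := by
            gcongr <;> exact norm_mul_le _ _
        _ = 2 * ‖Q‖ * ‖P ^ (n + 1)‖ := by ring
        _ ≤ 2 * ‖Q‖ * (‖P‖ * ‖P ^ n‖) := by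
            have hb : ‖P ^ (n + 1)‖ ≤ ‖P‖ * ‖P ^ n‖ := by
              rw [pow_succ']; exact norm_mul_le _ _
            have hq : (0 : ℝ) ≤ 2 * ‖Q‖ := by positivity
            nlinarith
        _ = 2 * ‖Q‖ * ‖P‖ * ‖P ^ n‖ := by ring
    have := h1 ▸ h2
    exact le_of_mul_le_mul_right this hP
  obtain ⟨n, hn⟩ := exists_nat_gt (2 * ‖Q‖ * ‖P‖)
  have := key n
  linarith
end

section
/- Let X and D be bounded linear operators on a complex Hilbert space with ‖X‖ = 1/2 and ‖X∘D - D∘X - 𝟙‖ ≤ ε for some ε > 0. Then ‖D‖ ≥ log(1/ε). -/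
open Real Finset Filter

/-- **Popa's estimate**: if `X`, `D` are bounded operators on a complex Hilbert space with
`‖X‖ = 1/2` and `‖X∘D - D∘X - 𝟙‖ ≤ ε` for some `ε > 0`, then `‖D‖ ≥ log (1/ε)`. -/
theorem popa_estimate
    {H : Type*} [NormedAddCommGroup H] [InnerProductSpace ℂ H] [CompleteSpace H]
    (X D : H →L[ℂ] H) (ε : ℝ) (hε : 0 < ε)
    (hX : ‖X‖ = 1 / 2)
    (hcomm : ‖X * D - D * X - 1‖ ≤ ε) :
    Real.log (1 / ε) ≤ ‖D‖ := by
  have hXne : X ≠ 0 := by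
    intro h; rw [h, norm_zero] at hX; norm_num at hX
  have hnt : Nontrivial H := by
    by_contra h
    rw [not_nontrivial_iff_subsingleton] at h
    exact hXne (ContinuousLinearMap.ext fun x => Subsingleton.elim _ _)
  set d := ‖D‖ with hd
  have hd0 : 0 ≤ d := norm_nonneg D
  set T : H →L[ℂ] H := X * D - D * X - 1 with hTdef
  have hXpow : ∀ n : ℕ, ‖X ^ n‖ ≤ (1/2 : ℝ)^n := fun n => by
    calc ‖X ^ n‖ ≤ ‖X‖ ^ n := norm_pow_le X n
    _ = (1/2 : ℝ)^n := by rw [hX]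
  -- key identity with error term
  have key : ∀ n : ℕ, ∃ S : H →L[ℂ] H,
      X ^ (n+1) * D - D * X ^ (n+1) = ((n+1 : ℕ) : ℂ) • X ^ n + S ∧
      ‖S‖ ≤ (n+1 : ℝ) * ε * (1/2)^n := by
    intro n
    induction n with
    | zero =>
      refine ⟨T, ?_, by simpa using hcomm⟩
      rw [hTdef]
      push_cast
      simp only [pow_one, pow_zero, one_smul]
      noncomm_ring
    | succ n ih =>
      obtain ⟨S, hS, hSn⟩ := ih
      refine ⟨X ^ (n+1) * T + S * X, ?_, ?_⟩
      · have expand : X ^ (n+2) * D - D * X ^ (n+2)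
            = X ^ (n+1) * (X * D - D * X) + (X ^ (n+1) * D - D * X ^ (n+1)) * X := by
          rw [pow_succ]
          noncomm_ring
        have hT1 : (X * D - D * X) = 1 + T := by rw [hTdef]; abel
        have hc : ((n+2:ℕ):ℂ) = 1 + ((n+1:ℕ):ℂ) := by push_cast; ring
        show X ^ (n+2) * D - D * X ^ (n+2) = ((n+2:ℕ):ℂ) • X ^ (n+1) + (X ^ (n+1) * T + S * X)
        calc X ^ (n+2) * D - D * X ^ (n+2)
            = X ^ (n+1) * (1 + T) + (((n+1:ℕ):ℂ) • X ^ n + S) * X := by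
              rw [expand, hT1, hS]
          _ = (X ^ (n+1) + ((n+1:ℕ):ℂ) • X ^ (n+1)) + (X ^ (n+1) * T + S * X) := by
              rw [add_mul, smul_mul_assoc, ← pow_succ, mul_add, mul_one]
              abel
          _ = ((n+2:ℕ):ℂ) • X ^ (n+1) + (X ^ (n+1) * T + S * X) := by
              rw [hc, add_smul, one_smul]
      · have h1 : ‖X ^ (n+1) * T‖ ≤ (1/2 : ℝ)^(n+1) * ε :=
          le_trans (norm_mul_le _ _) (by
            have := hXpow (n+1)
            have hT0 : ‖T‖ ≤ ε := hcomm
            exact mul_le_mul this hT0 (norm_nonneg _) (by positivity))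
        have h2 : ‖S * X‖ ≤ ((n+1 : ℝ) * ε * (1/2)^n) * (1/2) :=
          le_trans (norm_mul_le _ _) (by
            rw [hX]
            exact mul_le_mul_of_nonneg_right hSn (by norm_num))
        calc ‖X ^ (n+1) * T + S * X‖ ≤ ‖X ^ (n+1) * T‖ + ‖S * X‖ := norm_add_le _ _
        _ ≤ (1/2 : ℝ)^(n+1) * ε + ((n+1 : ℝ) * ε * (1/2)^n) * (1/2) := add_le_add h1 h2
        _ = ((n+1)+1 : ℝ) * ε * (1/2)^(n+1) := by ring
        _ = ((n+1 : ℕ)+1 : ℝ) * ε * (1/2)^(n+1) := by push_cast; ring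
  -- beta inequality
  set β : ℕ → ℝ := fun n => 2^n * ‖X ^ n‖ with hβ
  have hβ1 : ∀ n, β n ≤ 1 := fun n => by
    have := hXpow n
    have : (2:ℝ)^n * ‖X ^ n‖ ≤ 2^n * (1/2)^n :=
      mul_le_mul_of_nonneg_left this (by positivity)
    simpa [hβ, ← mul_pow] using this
  have hβ0 : ∀ n, 0 ≤ β n := fun n => by positivity
  have hA : ∀ n : ℕ, ((n:ℝ)+1) * β n ≤ d * β (n+1) + ((n:ℝ)+1) * ε := by
    intro n
    obtain ⟨S, hS, hSn⟩ := key n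
    have h1 : ((n:ℝ)+1) * ‖X ^ n‖ ≤ 2 * ‖X ^ (n+1)‖ * d + ((n:ℝ)+1) * ε * (1/2)^n := by
      have e1 : ((n+1:ℕ):ℂ) • X ^ n = (X ^ (n+1) * D - D * X ^ (n+1)) - S := by
        rw [hS]; abel
      have e2 : ‖((n+1:ℕ):ℂ) • X ^ n‖ = ((n:ℝ)+1) * ‖X ^ n‖ := by
        rw [norm_smul, Complex.norm_natCast]
        push_cast
        ring
      calc ((n:ℝ)+1) * ‖X ^ n‖ = ‖((n+1:ℕ):ℂ) • X ^ n‖ := e2.symm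
      _ ≤ ‖X ^ (n+1) * D - D * X ^ (n+1)‖ + ‖S‖ := by rw [e1]; exact norm_sub_le _ _
      _ ≤ (‖X ^ (n+1) * D‖ + ‖D * X ^ (n+1)‖) + ((n:ℝ)+1) * ε * (1/2)^n := by
        exact add_le_add (norm_sub_le _ _) hSn
      _ ≤ (‖X ^ (n+1)‖ * d + d * ‖X ^ (n+1)‖) + ((n:ℝ)+1) * ε * (1/2)^n := by
        exact add_le_add (add_le_add (norm_mul_le _ _) (norm_mul_le _ _)) le_rfl
      _ = 2 * ‖X ^ (n+1)‖ * d + ((n:ℝ)+1) * ε * (1/2)^n := by ring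
    have := mul_le_mul_of_nonneg_left h1 (by positivity : (0:ℝ) ≤ 2^n)
    calc ((n:ℝ)+1) * β n = 2^n * (((n:ℝ)+1) * ‖X ^ n‖) := by rw [hβ]; ring
    _ ≤ 2^n * (2 * ‖X ^ (n+1)‖ * d + ((n:ℝ)+1) * ε * (1/2)^n) := this
    _ = d * (2^(n+1) * ‖X ^ (n+1)‖) + ((n:ℝ)+1) * ε * (2^n * (1/2)^n) := by ring
    _ = d * β (n+1) + ((n:ℝ)+1) * ε := by
      rw [hβ, ← mul_pow]
      norm_num
  -- gamma telescoping
  set γ : ℕ → ℝ := fun n => d^n / (n.factorial : ℝ) * β n with hγ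
  have hγstep : ∀ n : ℕ, γ n ≤ γ (n+1) + ε * d^n / (n.factorial : ℝ) := by
    intro n
    have hfpos : (0:ℝ) < (n.factorial : ℝ) := by exact_mod_cast n.factorial_pos
    have hmul := mul_le_mul_of_nonneg_left (hA n)
      (by positivity : (0:ℝ) ≤ d^n / (((n+1).factorial : ℝ)))
    have hfs : (((n+1).factorial : ℝ)) = ((n:ℝ)+1) * (n.factorial : ℝ) := by
      rw [Nat.factorial_succ]; push_cast; ring
    calc γ n = d^n / (((n+1).factorial : ℝ)) * (((n:ℝ)+1) * β n) := by
          simp only [hγ, hfs]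
          field_simp
    _ ≤ d^n / (((n+1).factorial : ℝ)) * (d * β (n+1) + ((n:ℝ)+1) * ε) := hmul
    _ = γ (n+1) + ε * d^n / (n.factorial : ℝ) := by
        simp only [hγ, hfs, pow_succ]
        field_simp
  have hβzero : β 0 = 1 := by simp [hβ]
  have hγ0 : γ 0 = 1 := by simp [hγ, hβzero]
  have hchain : ∀ n : ℕ, 1 ≤ γ n + ε * ∑ k ∈ range n, d^k / (k.factorial : ℝ) := by
    intro n
    induction n with
    | zero => simp [hγ0]
    | succ n ih =>
      calc (1:ℝ) ≤ γ n + ε * ∑ k ∈ range n, d^k / (k.factorial : ℝ) := ih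
      _ ≤ (γ (n+1) + ε * d^n / (n.factorial : ℝ)) + ε * ∑ k ∈ range n, d^k / (k.factorial : ℝ) :=
          add_le_add (hγstep n) le_rfl
      _ = γ (n+1) + ε * ∑ k ∈ range (n+1), d^k / (k.factorial : ℝ) := by
          rw [Finset.sum_range_succ]
          ring
  have hmain : ∀ n : ℕ, 1 - ε * Real.exp d ≤ d^n / (n.factorial : ℝ) := by
    intro n
    have hsum : ∑ k ∈ range n, d^k / (k.factorial : ℝ) ≤ Real.exp d :=
      Real.sum_le_exp_of_nonneg hd0 n
    have h1 := hchain n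
    have h2 : γ n ≤ d^n / (n.factorial : ℝ) := by
      rw [hγ]
      have := hβ1 n
      nlinarith [hβ0 n, Nat.factorial_pos n, pow_nonneg hd0 n,
        div_nonneg (pow_nonneg hd0 n) (Nat.cast_nonneg n.factorial)]
    nlinarith
  have hlim : Tendsto (fun n : ℕ => d^n / (n.factorial : ℝ)) atTop (nhds 0) :=
    FloorSemiring.tendsto_pow_div_factorial_atTop d
  have hfin : 1 - ε * Real.exp d ≤ 0 := ge_of_tendsto' hlim hmain
  have h1ε : 1/ε ≤ Real.exp d := by
    rw [div_le_iff₀ hε] at *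
    nlinarith [Real.exp_pos d]
  calc Real.log (1/ε) ≤ Real.log (Real.exp d) :=
    Real.log_le_log (by positivity) h1ε
  _ = d := Real.log_exp d
end

section
/- Let A be a closed, densely defined, hermitian operator on a complex Hilbert space H such that the domain of A contains an orthonormal basis (ψₙ) of H consisting of eigenvectors of A. Then A is self-adjoint. -/
open scoped InnerProductSpace

/-- A closed, densely defined, hermitian (symmetric) operator on a complex separable
Hilbert space whose domain contains an orthonormal (Hilbert) basis of eigenvectors is
self-adjoint. -/
theorem closed_symmetric_with_eigenbasis_isSelfAdjoint
    {H : Type*} [NormedAddCommGroup H] [InnerProductSpace ℂ H] [CompleteSpace H]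
    (A : H →ₗ.[ℂ] H)
    (hdense : Dense (A.domain : Set H))
    (hclosed : A.IsClosed)
    (hsymm : ∀ ψ φ : A.domain, ⟪(ψ : H), A φ⟫_ℂ = ⟪A ψ, (φ : H)⟫_ℂ)
    (b : HilbertBasis ℕ ℂ H) (hb : ∀ n, b n ∈ A.domain)
    (lam : ℕ → ℂ)
    (heig : ∀ n, A ⟨b n, hb n⟩ = lam n • b n) :
    A.adjoint = A := by
  have hFA : A.adjoint.IsFormalAdjoint A := LinearPMap.adjoint_isFormalAdjoint hdense
  have hAle : A ≤ A.adjoint := by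
    refine LinearPMap.IsFormalAdjoint.le_adjoint hdense (fun x y => ?_)
    exact (hsymm x y).symm
  -- eigenvalues are real
  have hnorm : ∀ n, ⟪(b n : H), b n⟫_ℂ = 1 := by
    intro n
    have h := (orthonormal_iff_ite.mp b.orthonormal) n n
    simpa using h
  have hreal : ∀ n, (starRingEnd ℂ) (lam n) = lam n := by
    intro n
    have h := hsymm ⟨b n, hb n⟩ ⟨b n, hb n⟩
    rw [heig n, inner_smul_right, inner_smul_left] at h
    simpa [hnorm n, b.orthonormal.ne_zero n] using h.symm
  refine le_antisymm ?_ hAle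
  -- A† ≤ A via closed graph
  apply LinearPMap.le_of_le_graph
  intro u hu
  rw [LinearPMap.mem_graph_iff] at hu
  obtain ⟨y, hy1, hy2⟩ := hu
  -- coefficients
  set c : ℕ → ℂ := fun n => b.repr (y : H) n with hc
  have hrepr_z : ∀ n, b.repr (A.adjoint y) n = lam n * c n := by
    intro n
    simp only [hc, HilbertBasis.repr_apply_apply]
    have h := hFA y ⟨b n, hb n⟩
    -- ⟪A† y, b n⟫ = ⟪y, A (b n)⟫ = lam n * ⟪y, b n⟫... take conj
    rw [heig n, inner_smul_right] at h
    calc ⟪(b n : H), A.adjoint y⟫_ℂ = (starRingEnd ℂ) ⟪(A.adjoint y : H), b n⟫_ℂ := by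
          rw [inner_conj_symm]
      _ = (starRingEnd ℂ) (lam n * ⟪(y : H), b n⟫_ℂ) := by rw [h]
      _ = lam n * ⟪(b n : H), (y : H)⟫_ℂ := by
          rw [map_mul, hreal n, inner_conj_symm]
  have hsum_y : HasSum (fun n => c n • (b n : H)) (y : H) := b.hasSum_repr _
  have hsum_z : HasSum (fun n => (lam n * c n) • (b n : H)) (A.adjoint y) := by
    have := b.hasSum_repr (A.adjoint y)
    simpa [hrepr_z] using this
  -- partial sums lie in the graph
  have hmem : ∀ s : Finset ℕ,
      ((∑ i ∈ s, c i • (b i : H)), (∑ i ∈ s, (lam i * c i) • (b i : H))) ∈ A.graph := by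
    intro s
    have hx : (∑ i ∈ s, c i • (b i : H)) ∈ A.domain :=
      Submodule.sum_mem _ fun i _ => Submodule.smul_mem _ _ (hb i)
    have hxeq : (⟨∑ i ∈ s, c i • (b i : H), hx⟩ : A.domain)
        = ∑ i ∈ s, c i • (⟨b i, hb i⟩ : A.domain) := by
      apply Subtype.ext
      push_cast
      rfl
    rw [LinearPMap.mem_graph_iff]
    refine ⟨⟨_, hx⟩, rfl, ?_⟩
    show A.toFun _ = _
    rw [hxeq, map_sum]
    refine Finset.sum_congr rfl fun i _ => ?_
    rw [LinearMap.map_smul]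
    rw [show A.toFun (⟨b i, hb i⟩ : A.domain) = lam i • b i from heig i, smul_smul, mul_comm (c i) (lam i)]
  have htend : Filter.Tendsto
      (fun s : Finset ℕ => ((∑ i ∈ s, c i • (b i : H)), (∑ i ∈ s, (lam i * c i) • (b i : H))))
      Filter.atTop (nhds ((y : H), A.adjoint y)) :=
    hsum_y.prodMk_nhds hsum_z
  have : ((y : H), A.adjoint y) ∈ A.graph :=
    hclosed.mem_of_tendsto htend (Filter.Eventually.of_forall hmem)
  rwa [show ((y : H), A.adjoint y) = u from Prod.ext hy1 hy2] at this
end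

section
/- If A is a closed, densely defined hermitian operator on a complex Hilbert space whose domain contains an orthonormal basis of eigenvectors, then the range of A + i·𝟙 is all of H. -/
open scoped InnerProductSpace
open Complex Filter
open scoped ENNReal

private lemma key_solve
    {H : Type*} [NormedAddCommGroup H] [InnerProductSpace ℂ H] [CompleteSpace H]
    (A : H →ₗ.[ℂ] H)
    (hclosed : A.IsClosed)
    (b : HilbertBasis ℕ ℂ H) (hb : ∀ n, b n ∈ A.domain)
    (lam : ℕ → ℝ)
    (heig : ∀ n, A ⟨b n, hb n⟩ = (lam n : ℂ) • b n)
    (σ : ℂ) (hσ : σ = Complex.I ∨ σ = -Complex.I) (η : H) :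
    ∃ ψ : A.domain, A ψ + σ • (ψ : H) = η := by
  classical
  have hσre : σ.re = 0 := by rcases hσ with h | h <;> simp [h]
  have hσim : σ.im = 1 ∨ σ.im = -1 := by rcases hσ with h | h <;> simp [h]
  -- denominators
  set z : ℕ → ℂ := fun n => (lam n : ℂ) + σ with hz
  have hznormsq : ∀ n, ‖z n‖ ^ 2 = (lam n) ^ 2 + 1 := by
    intro n
    rw [Complex.sq_norm]
    rcases hσim with h | h <;>
      simp [Complex.normSq_apply, hz, hσre, h] <;> ring
  have hz1 : ∀ n, 1 ≤ ‖z n‖ := by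
    intro n
    nlinarith [hznormsq n, norm_nonneg (z n), sq_nonneg (lam n)]
  have hz0 : ∀ n, z n ≠ 0 := fun n h => by
    have := hz1 n; rw [h] at this; simp at this; linarith
  have hzlam : ∀ n, |lam n| ≤ ‖z n‖ := by
    intro n
    nlinarith [hznormsq n, norm_nonneg (z n), _root_.sq_abs (lam n), abs_nonneg (lam n)]
  set e : ℕ → ℂ := fun n => b.repr η n with he
  set f : ℕ → ℂ := fun n => e n / z n with hf
  set g : ℕ → ℂ := fun n => (lam n : ℂ) * f n with hg
  have hfe : ∀ n, ‖f n‖ ≤ ‖e n‖ := by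
    intro n
    rw [hf, norm_div]
    exact div_le_self (norm_nonneg _) (hz1 n)
  have hge : ∀ n, ‖g n‖ ≤ ‖e n‖ := by
    intro n
    have : ‖g n‖ = |lam n| * (‖e n‖ / ‖z n‖) := by
      simp [hg, hf, norm_div, Complex.norm_real]
    rw [this]
    have hne : ‖z n‖ ≠ 0 := by have := hz1 n; linarith
    calc |lam n| * (‖e n‖ / ‖z n‖) ≤ ‖z n‖ * (‖e n‖ / ‖z n‖) := by
          apply mul_le_mul_of_nonneg_right (hzlam n)
          positivity
      _ = ‖e n‖ := by
          rw [← mul_div_assoc]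
          exact mul_div_cancel_left₀ _ hne
  have hesum : Summable fun n => ‖e n‖ ^ (2 : ℝ≥0∞).toReal :=
    ((lp.memℓp (b.repr η)).summable (by norm_num))
  have hmem : ∀ (u : ℕ → ℂ), (∀ n, ‖u n‖ ≤ ‖e n‖) → Memℓp u 2 := by
    intro u hu
    apply memℓp_gen
    apply Summable.of_nonneg_of_le (fun n => by positivity) _ hesum
    intro n
    apply Real.rpow_le_rpow (norm_nonneg _) (hu n) (by norm_num)
  set F : lp (fun _ : ℕ => ℂ) 2 := ⟨f, hmem f hfe⟩ with hF
  set G : lp (fun _ : ℕ => ℂ) 2 := ⟨g, hmem g hge⟩ with hG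
  set ψH : H := b.repr.symm F with hψH
  set χ : H := b.repr.symm G with hχ
  have hsF : HasSum (fun n => f n • b n) ψH := b.hasSum_repr_symm F
  have hsG : HasSum (fun n => g n • b n) χ := b.hasSum_repr_symm G
  -- partial sums lie in graph
  have hgraph : ∀ s : Finset ℕ,
      ((∑ n ∈ s, f n • b n, ∑ n ∈ s, g n • b n) : H × H) ∈ A.graph := by
    intro s
    rw [LinearPMap.mem_graph_iff]
    refine ⟨∑ n ∈ s, f n • (⟨b n, hb n⟩ : A.domain), ?_, ?_⟩
    · push_cast [Submodule.coe_sum]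
      rfl
    · show A.toFun _ = _
      rw [map_sum]
      refine Finset.sum_congr rfl fun n _ => ?_
      rw [LinearMap.map_smul, A.toFun_eq_coe, heig n, smul_smul]
      rw [hg, mul_comm]
  have htend : Tendsto (fun s : Finset ℕ =>
      ((∑ n ∈ s, f n • b n, ∑ n ∈ s, g n • b n) : H × H)) atTop (nhds (ψH, χ)) :=
    Filter.Tendsto.prodMk_nhds hsF hsG
  have hmemg : ((ψH, χ) : H × H) ∈ A.graph :=
    hclosed.mem_of_tendsto htend (Eventually.of_forall hgraph)
  rw [LinearPMap.mem_graph_iff] at hmemg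
  obtain ⟨ψ, hψc, hAψ⟩ := hmemg
  refine ⟨ψ, ?_⟩
  rw [hAψ, hψc]
  -- show χ + σ • ψH = η
  apply b.repr.injective
  rw [map_add, map_smul]
  simp only [hψH, hχ, LinearIsometryEquiv.apply_symm_apply]
  ext n
  simp only [lp.coeFn_add, lp.coeFn_smul, Pi.add_apply, Pi.smul_apply, smul_eq_mul]
  show g n + σ * f n = e n
  have hzn : ((lam n : ℂ) + σ) ≠ 0 := hz0 n
  rw [hg, hf]
  show (lam n : ℂ) * (e n / ((lam n : ℂ) + σ)) + σ * (e n / ((lam n : ℂ) + σ)) = e n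
  field_simp

/-- For a closed, densely defined hermitian operator `A` on a complex separable Hilbert
space whose domain contains an orthonormal basis of eigenvectors (with real eigenvalues),
the range of `A + i·𝟙` is all of `H`. -/
theorem range_add_i_eq_top_of_eigenbasis
    {H : Type*} [NormedAddCommGroup H] [InnerProductSpace ℂ H] [CompleteSpace H]
    (A : H →ₗ.[ℂ] H)
    (hdense : Dense (A.domain : Set H))
    (hclosed : A.IsClosed)
    (hsymm : ∀ ψ φ : A.domain, ⟪(ψ : H), A φ⟫_ℂ = ⟪A ψ, (φ : H)⟫_ℂ)
    (b : HilbertBasis ℕ ℂ H) (hb : ∀ n, b n ∈ A.domain)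
    (lam : ℕ → ℝ)
    (heig : ∀ n, A ⟨b n, hb n⟩ = (lam n : ℂ) • b n) :
    (∀ η : H, ∃ ψ : A.domain, A ψ + Complex.I • (ψ : H) = η) ∧
    (∀ η : H, ∃ ψ : A.domain, A ψ - Complex.I • (ψ : H) = η) := by
  constructor
  · exact fun η => key_solve A hclosed b hb lam heig Complex.I (Or.inl rfl) η
  · intro η
    obtain ⟨ψ, hψ⟩ := key_solve A hclosed b hb lam heig (-Complex.I) (Or.inr rfl) η
    exact ⟨ψ, by rw [sub_eq_add_neg, ← neg_smul]; exact hψ⟩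
end
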